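/- Let p ∈ ℕ, Σ̂ a p×p real symmetric positive semidefinite matrix, β_0 ∈ ℝ^p, λ ≥ λ′ > 0 and t ≥ 0. Define β_λ := (Σ̂ + λ·I_p)^{-1} Σ̂ β_0 and β_{λ′} := (Σ̂ + λ′·I_p)^{-1} Σ̂ β_0, and write Σ̂_λ := Σ̂ + λ·I_p. Then ⟨Σ̂_λ((I_p + t·Σ̂_λ)^{-1} − exp(−t·Σ̂_λ))β_λ, β_{λ′} − β_λ⟩ ≥ 0; that is, the compatibility condition for the gradient-flow versus ridge comparison holds for the target vector γ = β_{λ′}. -/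

import Mathlib

open Matrix

/-- Euclidean inner product on `Fin p → ℝ`. -/
noncomputable def ip {p : ℕ} (v w : Fin p → ℝ) : ℝ := ∑ i, v i * w i

/-- the compatibility condition for the gradient-flow versus ridge comparison
holds for the target vector `γ = β_{λ′}` whenever `0 < λ′ ≤ λ`. -/
theorem gf_ridge_condition_for_ridge_target
    (p : ℕ) (Sig : Matrix (Fin p) (Fin p) ℝ) (hSig : Sig.PosSemidef)
    (beta0 : Fin p → ℝ) (lam lam' : ℝ) (hlam' : 0 < lam') (hll : lam' ≤ lam)
    (t : ℝ) (ht : 0 ≤ t)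
    (Sigl : Matrix (Fin p) (Fin p) ℝ) (hSigl_def : Sigl = Sig + lam • 1)
    (betal betal' : Fin p → ℝ)
    (hbetal : betal = Sigl⁻¹ *ᵥ (Sig *ᵥ beta0))
    (hbetal' : betal' = (Sig + lam' • 1)⁻¹ *ᵥ (Sig *ᵥ beta0)) :
    0 ≤ ip (Sigl *ᵥ (((1 + t • Sigl)⁻¹ - NormedSpace.exp (-(t • Sigl))) *ᵥ betal))
        (betal' - betal) := by
  classical
  have hH : Sig.IsHermitian := hSig.1
  set U : Matrix (Fin p) (Fin p) ℝ := (hH.eigenvectorUnitary : Matrix (Fin p) (Fin p) ℝ) with hUdef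
  set μ : Fin p → ℝ := hH.eigenvalues with hμdef
  have hU2 : U * star U = 1 := Matrix.mem_unitaryGroup_iff.mp hH.eigenvectorUnitary.2
  have hU1 : star U * U = 1 := Matrix.mem_unitaryGroup_iff'.mp hH.eigenvectorUnitary.2
  set Φ : (Fin p → ℝ) → Matrix (Fin p) (Fin p) ℝ :=
    fun d => U * diagonal d * star U with hΦdef
  have hdiag1 : diagonal (1 : Fin p → ℝ) = 1 := diagonal_one
  have hone : Φ 1 = 1 := by simp only [hΦdef]; rw [hdiag1, mul_one]; exact hU2
  have hmul : ∀ d e, Φ d * Φ e = Φ (d * e) := by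
    intro d e
    simp only [hΦdef]
    rw [show U * diagonal d * star U * (U * diagonal e * star U)
        = U * (diagonal d * (star U * U) * diagonal e) * star U by
      simp only [mul_assoc]]
    rw [hU1, mul_one, diagonal_mul_diagonal]
    rfl
  have hadd : ∀ d e, Φ d + Φ e = Φ (d + e) := by
    intro d e
    simp only [hΦdef]
    rw [← add_mul, ← mul_add, diagonal_add]
    rfl
  have hsmul : ∀ (c : ℝ) d, c • Φ d = Φ (c • d) := by
    intro c d
    simp only [hΦdef, diagonal_smul]
    rw [mul_smul_comm, smul_mul_assoc]
  have hsub : ∀ d e, Φ d - Φ e = Φ (d - e) := by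
    intro d e
    have := hadd e (d - e)
    rw [add_sub_cancel] at this
    rw [← this, add_sub_cancel_left]
  have hUunit : IsUnit U := ⟨⟨U, star U, hU2, hU1⟩, rfl⟩
  have hΦcongr : ∀ {d e : Fin p → ℝ}, d = e → Φ d = Φ e := fun h => by rw [h]
  have hUinv : U⁻¹ = star U := inv_eq_right_inv hU2
  have hinv : ∀ d : Fin p → ℝ, (∀ i, d i ≠ 0) → (Φ d)⁻¹ = Φ (fun i => (d i)⁻¹) := by
    intro d hd
    apply inv_eq_right_inv
    rw [hmul]
    have : (d * fun i => (d i)⁻¹) = 1 := by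
      funext i; simp [mul_inv_cancel₀ (hd i)]
    rw [this, hone]
  have hexp : ∀ d : Fin p → ℝ,
      NormedSpace.exp (Φ d) = Φ (fun i => Real.exp (d i)) := by
    intro d
    have h1 : Φ d = U * diagonal d * U⁻¹ := by rw [hUinv]
    rw [h1, Matrix.exp_conj U (diagonal d) hUunit, Matrix.exp_diagonal, hUinv]
    congr 1
    congr 1
    congr 1
    funext i
    rw [Pi.exp_def, Real.exp_eq_exp_ℝ]
  have hSigΦ : Sig = Φ μ := by
    have h := hH.spectral_theorem
    have h2 : (RCLike.ofReal ∘ hH.eigenvalues : Fin p → ℝ) = μ := by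
      funext i
      simp [Function.comp, RCLike.ofReal_real_eq_id]; rfl
    rw [h2] at h
    exact h
  have hμnn : ∀ i, 0 ≤ μ i := fun i => hSig.eigenvalues_nonneg i
  have hconst : ∀ c : ℝ, c • (1 : Matrix (Fin p) (Fin p) ℝ) = Φ (fun _ => c) := by
    intro c
    rw [← hone, hsmul]
    exact hΦcongr (by funext i; simp [Pi.smul_apply])
  set s : Fin p → ℝ := fun i => μ i + lam with hsdef
  set s' : Fin p → ℝ := fun i => μ i + lam' with hs'def
  have hspos : ∀ i, 0 < s i := fun i => add_pos_of_nonneg_of_pos (hμnn i) (lt_of_lt_of_le hlam' hll)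
  have hs'pos : ∀ i, 0 < s' i := fun i => add_pos_of_nonneg_of_pos (hμnn i) hlam'
  have hSiglΦ : Sigl = Φ s := by
    rw [hSigl_def, hSigΦ, hconst lam, hadd]
    exact hΦcongr rfl
  have hSiglInv : Sigl⁻¹ = Φ (fun i => (s i)⁻¹) := by
    rw [hSiglΦ, hinv _ (fun i => (hspos i).ne')]
  set f1 : Fin p → ℝ := fun i => (s i)⁻¹ * μ i with hf1def
  set f2 : Fin p → ℝ := fun i => (s' i)⁻¹ * μ i with hf2def
  have hbetalΦ : betal = Φ f1 *ᵥ beta0 := by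
    rw [hbetal, hSiglInv, hSigΦ, mulVec_mulVec, hmul]
    rfl
  have hbetal'Φ : betal' = Φ f2 *ᵥ beta0 := by
    have h2 : Sig + lam' • 1 = Φ s' := by
      rw [hSigΦ, hconst lam', hadd]; exact hΦcongr rfl
    rw [hbetal', h2, hinv _ (fun i => (hs'pos i).ne'), hSigΦ, mulVec_mulVec, hmul]
    rfl
  set g : Fin p → ℝ := fun i => (1 + t * s i)⁻¹ - Real.exp (-(t * s i)) with hgdef
  have hBig : (1 + t • Sigl)⁻¹ - NormedSpace.exp (-(t • Sigl)) = Φ g := by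
    have h1 : (1 : Matrix (Fin p) (Fin p) ℝ) + t • Sigl = Φ (fun i => 1 + t * s i) := by
      rw [hSiglΦ, hsmul, ← hone, hadd]
      congr 1
    have h1pos : ∀ i, (0:ℝ) < 1 + t * s i := fun i => by
      have := mul_nonneg ht (hspos i).le; linarith
    have h2 : -(t • Sigl) = Φ (fun i => -(t * s i)) := by
      rw [hSiglΦ, hsmul, ← neg_one_smul ℝ (Φ _), hsmul]
      exact hΦcongr (by funext i; simp)
    rw [h1, hinv _ (fun i => (h1pos i).ne'), h2, hexp, hsub]
    exact hΦcongr rfl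
  -- reduce to a sum
  set a : Fin p → ℝ := star U *ᵥ beta0 with hadef
  have hkey : ∀ d e : Fin p → ℝ,
      ip (Φ d *ᵥ beta0) (Φ e *ᵥ beta0) = ∑ i, (d i * e i) * (a i) ^ 2 := by
    intro d e
    have hx : ∀ d : Fin p → ℝ, Φ d *ᵥ beta0 = U *ᵥ (diagonal d *ᵥ a) := by
      intro d
      simp only [hΦdef, hadef, mulVec_mulVec, mul_assoc]
    rw [hx, hx]
    show (U *ᵥ (diagonal d *ᵥ a)) ⬝ᵥ (U *ᵥ (diagonal e *ᵥ a)) = _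
    rw [dotProduct_mulVec, vecMul_mulVec]
    have hUT : Uᵀ = star U := by
      rw [star_eq_conjTranspose, conjTranspose_eq_transpose_of_trivial]
    rw [hUT, hU1, vecMul_one]
    simp only [dotProduct, mulVec_diagonal]
    apply Finset.sum_congr rfl
    intro i _
    ring
  have hgoal : ip (Sigl *ᵥ (((1 + t • Sigl)⁻¹ - NormedSpace.exp (-(t • Sigl))) *ᵥ betal))
      (betal' - betal) = ∑ i, ((s i * g i * f1 i) * (f2 i - f1 i)) * (a i) ^ 2 := by
    have hL : Sigl *ᵥ (((1 + t • Sigl)⁻¹ - NormedSpace.exp (-(t • Sigl))) *ᵥ betal)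
        = Φ (fun i => s i * g i * f1 i) *ᵥ beta0 := by
      rw [hBig, hbetalΦ, hSiglΦ, mulVec_mulVec, mulVec_mulVec, hmul, hmul]
      congr 1
    have hR : betal' - betal = Φ (f2 - f1) *ᵥ beta0 := by
      rw [hbetalΦ, hbetal'Φ, ← sub_mulVec, hsub]
    rw [hL, hR, hkey]
    apply Finset.sum_congr rfl
    intro i _
    simp [Pi.sub_apply]
  rw [hgoal]
  apply Finset.sum_nonneg
  intro i _
  have hg : 0 ≤ g i := by
    have hts : 0 ≤ t * s i := mul_nonneg ht (hspos i).le
    have h1 : Real.exp (-(t * s i)) ≤ (1 + t * s i)⁻¹ := by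
      rw [Real.exp_neg]
      apply inv_anti₀ (by positivity)
      linarith [Real.add_one_le_exp (t * s i)]
    simp only [hgdef]
    linarith
  have hf1 : 0 ≤ f1 i := mul_nonneg (inv_nonneg.2 (hspos i).le) (hμnn i)
  have hdiff : 0 ≤ f2 i - f1 i := by
    have : (s i)⁻¹ ≤ (s' i)⁻¹ := by
      apply inv_anti₀ (hs'pos i)
      simp only [hsdef, hs'def]
      linarith
    have := sub_nonneg.2 (mul_le_mul_of_nonneg_right this (hμnn i))
    simpa [hf1def, hf2def] using this
  have := mul_nonneg (mul_nonneg (mul_nonneg (mul_nonneg (hspos i).le hg) hf1) hdiff)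
    (sq_nonneg (a i))
  exact this
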